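/- (Remark 1.3(2), second implication.) Given a Frobenius structure in flat coordinates on U ⊆ ℂ^m (with constant D) and a submanifold datum ι : W → U, suppose there exists a constant λ ∈ ℂ with A_{E_N^⊥} = λ·Id, i.e. ⟨h(X,Y), E_N^⊥⟩ = λ⟨X,Y⟩ for all tangent fields X,Y. Then the induced Euler condition holds with constant D_N = D + 2λ: ⟨∇_X E_N, Y⟩ + ⟨X, ∇_Y E_N⟩ = (D + 2λ)⟨X,Y⟩ for all tangent fields X,Y. -/

import Mathlib

set_option maxHeartbeats 1000000
set_option synthInstance.maxHeartbeats 400000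


open scoped BigOperators

noncomputable section

/-- A Frobenius structure in flat coordinates on a connected open set `U ⊆ ℂ^m`:
a nondegenerate symmetric bilinear form, a holomorphic family of commutative
associative invariant products with constant unit `e`, potentiality, and a
holomorphic Euler field `E` with constant `Dconst`. The ambient Levi-Civita
connection is the directional derivative. -/
structure FrobeniusStructure (m : ℕ) where
  U : Set (Fin m → ℂ)
  U_open : IsOpen U
  U_conn : IsConnected U
  g : (Fin m → ℂ) →ₗ[ℂ] (Fin m → ℂ) →ₗ[ℂ] ℂ
  g_symm : ∀ x y, g x y = g y x
  g_nondeg : ∀ x, (∀ y, g x y = 0) → x = 0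
  mul : (Fin m → ℂ) → (Fin m → ℂ) →ₗ[ℂ] (Fin m → ℂ) →ₗ[ℂ] (Fin m → ℂ)
  mul_holo : ∀ x y, DifferentiableOn ℂ (fun p => mul p x y) U
  mul_comm : ∀ p x y, mul p x y = mul p y x
  mul_assoc : ∀ p x y z, mul p (mul p x y) z = mul p x (mul p y z)
  g_invariant : ∀ p x y z, g (mul p x y) z = g x (mul p y z)
  e : Fin m → ℂ
  e_unit : ∀ p x, mul p e x = x
  potential : ∀ p ∈ U, ∀ w x y z : Fin m → ℂ,
    fderiv ℂ (fun q => g (mul q x y) z) p w = fderiv ℂ (fun q => g (mul q w y) z) p x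
  E : (Fin m → ℂ) → (Fin m → ℂ)
  E_holo : DifferentiableOn ℂ E U
  Dconst : ℂ
  euler_metric : ∀ p ∈ U, ∀ x y : Fin m → ℂ,
    g (fderiv ℂ E p x) y + g x (fderiv ℂ E p y) = Dconst * g x y
  euler_prod : ∀ p ∈ U, ∀ x y : Fin m → ℂ,
    fderiv ℂ (fun q => mul q x y) p (E p) - fderiv ℂ E p (mul p x y)
      + mul p (fderiv ℂ E p x) y + mul p x (fderiv ℂ E p y) = mul p x y

/-- A submanifold datum: a holomorphic embedding `emb : W → U` of a connected
open set `W ⊆ ℂ^n`, with everywhere injective differential, such that the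
metric restricted to the tangent spaces `T_pN = range (D emb)_w` is
nondegenerate; `pr w` is the `g`-orthogonal projection onto the tangent space. -/
structure SubmanifoldDatum (m n : ℕ) (F : FrobeniusStructure m) where
  W : Set (Fin n → ℂ)
  W_open : IsOpen W
  W_conn : IsConnected W
  emb : (Fin n → ℂ) → (Fin m → ℂ)
  emb_holo : DifferentiableOn ℂ emb W
  emb_maps : ∀ w ∈ W, emb w ∈ F.U
  emb_inj : Set.InjOn emb W
  demb_inj : ∀ w ∈ W, Function.Injective (fderiv ℂ emb w)
  pr : (Fin n → ℂ) → (Fin m → ℂ) →ₗ[ℂ] (Fin m → ℂ)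
  pr_mem : ∀ w ∈ W, ∀ x, pr w x ∈ Set.range (fderiv ℂ emb w)
  pr_fix : ∀ w ∈ W, ∀ x ∈ Set.range (fderiv ℂ emb w), pr w x = x
  pr_orth : ∀ w ∈ W, ∀ x : Fin m → ℂ, ∀ y ∈ Set.range (fderiv ℂ emb w),
    F.g (x - pr w x) y = 0
  g_nondeg_tangent : ∀ w ∈ W, ∀ x ∈ Set.range (fderiv ℂ emb w),
    (∀ y ∈ Set.range (fderiv ℂ emb w), F.g x y = 0) → x = 0

namespace SubmanifoldDatum

variable {m n : ℕ} {F : FrobeniusStructure m}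

/-- The tangent space `T_pN` at `p = emb w`. -/
def T (S : SubmanifoldDatum m n F) (w : Fin n → ℂ) : Set (Fin m → ℂ) :=
  Set.range (fderiv ℂ S.emb w)

open Classical in
/-- The coordinate vector mapped by `(D emb)_w` to a tangent vector `v`
(junk value `0` if `v` is not tangent). -/
def lift (S : SubmanifoldDatum m n F) (w : Fin n → ℂ) (v : Fin m → ℂ) : Fin n → ℂ :=
  if h : v ∈ Set.range (fderiv ℂ S.emb w) then h.choose else 0

/-- A tangent field: a holomorphic map `W → ℂ^m` with values in the tangent spaces. -/
def IsTangentField (S : SubmanifoldDatum m n F) (X : (Fin n → ℂ) → (Fin m → ℂ)) : Prop :=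
  DifferentiableOn ℂ X S.W ∧ ∀ w ∈ S.W, X w ∈ S.T w

/-- `D_X Y`: the derivative of `Y` in the coordinate direction mapped by `D emb` to `X`. -/
def covD (S : SubmanifoldDatum m n F) (X Y : (Fin n → ℂ) → (Fin m → ℂ)) :
    (Fin n → ℂ) → (Fin m → ℂ) :=
  fun w => fderiv ℂ Y w (S.lift w (X w))

/-- The induced (Levi-Civita) connection `∇_X Y := pr (D_X Y)`. -/
def nabla (S : SubmanifoldDatum m n F) (X Y : (Fin n → ℂ) → (Fin m → ℂ)) :
    (Fin n → ℂ) → (Fin m → ℂ) :=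
  fun w => S.pr w (S.covD X Y w)

/-- The second fundamental form `h(X,Y) := (D_X Y)^⊥`. -/
def sff (S : SubmanifoldDatum m n F) (X Y : (Fin n → ℂ) → (Fin m → ℂ)) :
    (Fin n → ℂ) → (Fin m → ℂ) :=
  fun w => S.covD X Y w - S.pr w (S.covD X Y w)

/-- The shape operator `A_Ξ X := - pr (D_X Ξ)` of a normal field `Ξ`. -/
def shape (S : SubmanifoldDatum m n F) (Xi X : (Fin n → ℂ) → (Fin m → ℂ)) :
    (Fin n → ℂ) → (Fin m → ℂ) :=
  fun w => - S.pr w (S.covD X Xi w)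

/-- The Lie bracket of tangent fields. -/
def bracket (S : SubmanifoldDatum m n F) (X Y : (Fin n → ℂ) → (Fin m → ℂ)) :
    (Fin n → ℂ) → (Fin m → ℂ) :=
  fun w => S.covD X Y w - S.covD Y X w

/-- `e_N := pr e`, the tangential part of the unit field. -/
def eN (S : SubmanifoldDatum m n F) : (Fin n → ℂ) → (Fin m → ℂ) :=
  fun w => S.pr w F.e

/-- `E_N := pr (E ∘ emb)`, the tangential part of the Euler field. -/
def EN (S : SubmanifoldDatum m n F) : (Fin n → ℂ) → (Fin m → ℂ) :=
  fun w => S.pr w (F.E (S.emb w))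

/-- `E_N^⊥ := E ∘ emb - E_N`, the normal part of the Euler field. -/
def ENperp (S : SubmanifoldDatum m n F) : (Fin n → ℂ) → (Fin m → ℂ) :=
  fun w => F.E (S.emb w) - S.pr w (F.E (S.emb w))

/-- The induced product `X * Y := pr (X ∘ Y)`. -/
def star (S : SubmanifoldDatum m n F) (X Y : (Fin n → ℂ) → (Fin m → ℂ)) :
    (Fin n → ℂ) → (Fin m → ℂ) :=
  fun w => S.pr w (F.mul (S.emb w) (X w) (Y w))

/-- The induced metric is flat: the curvature of `∇` vanishes. -/
def FlatInduced (S : SubmanifoldDatum m n F) : Prop :=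
  ∀ X Y Z, S.IsTangentField X → S.IsTangentField Y → S.IsTangentField Z →
    ∀ w ∈ S.W,
      S.nabla X (S.nabla Y Z) w - S.nabla Y (S.nabla X Z) w
        - S.nabla (S.bracket X Y) Z w = 0

/-- The tangent spaces are closed under the ambient product:
`T_pN ∘_p T_pN ⊆ T_pN`. -/
def ClosedUnderMul (S : SubmanifoldDatum m n F) : Prop :=
  ∀ w ∈ S.W, ∀ x ∈ S.T w, ∀ y ∈ S.T w, F.mul (S.emb w) x y ∈ S.T w

/-- The covariant derivative 4-tensor
`(X', X, Y, Z) ↦ X'⟨X*Y, Z⟩ − ⟨(∇_{X'}X)*Y, Z⟩ − ⟨X*(∇_{X'}Y), Z⟩ − ⟨X*Y, ∇_{X'}Z⟩`. -/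
def ctensor (S : SubmanifoldDatum m n F) (X' X Y Z : (Fin n → ℂ) → (Fin m → ℂ)) :
    (Fin n → ℂ) → ℂ :=
  fun w => fderiv ℂ (fun v => F.g (S.star X Y v) (Z v)) w (S.lift w (X' w))
    - F.g (S.star (S.nabla X' X) Y w) (Z w)
    - F.g (S.star X (S.nabla X' Y) w) (Z w)
    - F.g (S.star X Y w) (S.nabla X' Z w)

/-- `N` is a Frobenius submanifold: the induced data satisfy the Frobenius
manifold axioms. -/
structure IsFrobeniusSub (S : SubmanifoldDatum m n F) : Prop where
  nabla_flat : S.FlatInduced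
  star_comm : ∀ X Y, S.IsTangentField X → S.IsTangentField Y →
    ∀ w ∈ S.W, S.star X Y w = S.star Y X w
  star_assoc : ∀ X Y Z, S.IsTangentField X → S.IsTangentField Y → S.IsTangentField Z →
    ∀ w ∈ S.W, S.star (S.star X Y) Z w = S.star X (S.star Y Z) w
  star_unit : ∀ X, S.IsTangentField X → ∀ w ∈ S.W, S.star X S.eN w = X w
  eN_flat : ∀ X, S.IsTangentField X → ∀ w ∈ S.W, S.nabla X S.eN w = 0
  star_invariant : ∀ X Y Z, S.IsTangentField X → S.IsTangentField Y → S.IsTangentField Z →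
    ∀ w ∈ S.W, F.g (S.star X Y w) (Z w) = F.g (X w) (S.star Y Z w)
  potential_symm : ∀ X' X Y Z, S.IsTangentField X' → S.IsTangentField X →
      S.IsTangentField Y → S.IsTangentField Z → ∀ w ∈ S.W,
    S.ctensor X' X Y Z w = S.ctensor X X' Y Z w ∧
    S.ctensor X' X Y Z w = S.ctensor X' Y X Z w ∧
    S.ctensor X' X Y Z w = S.ctensor X' X Z Y w
  euler_metric : ∃ DN : ℂ, ∀ X Y, S.IsTangentField X → S.IsTangentField Y →
    ∀ w ∈ S.W, F.g (S.nabla X S.EN w) (Y w) + F.g (X w) (S.nabla Y S.EN w)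
      = DN * F.g (X w) (Y w)
  euler_prod : ∀ X Y, S.IsTangentField X → S.IsTangentField Y → ∀ w ∈ S.W,
    S.nabla X (S.star Y S.EN) w - S.star (S.nabla X Y) S.EN w
      + S.star X (S.nabla Y S.EN) w - S.nabla (S.star X Y) S.EN w = S.star X Y w

/-- `N` is a natural Frobenius submanifold: a Frobenius submanifold whose
tangent spaces are closed under the ambient product. -/
def IsNaturalFrobeniusSub (S : SubmanifoldDatum m n F) : Prop :=
  S.IsFrobeniusSub ∧ S.ClosedUnderMul

end SubmanifoldDatum


open Metric Complex intervalIntegral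

namespace FrobAux

variable {n m : ℕ}

lemma line_hasDerivAt {f : (Fin n → ℂ) → (Fin m → ℂ)} {v u : Fin n → ℂ}
    (hf : DifferentiableAt ℂ f v) :
    HasDerivAt (fun z : ℂ => f (v + z • u)) (fderiv ℂ f v u) 0 := by
  have h1 : HasDerivAt (fun z : ℂ => v + z • u) u 0 := by
    simpa using ((hasDerivAt_id (0 : ℂ)).smul_const u).const_add v
  have h2 := hf.hasFDerivAt
  have h0 : v + (0 : ℂ) • u = v := by simp
  rw [← h0] at h2
  have h3 := h2.comp_hasDerivAt (0 : ℂ) h1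
  simp only [zero_smul, add_zero] at h3
  exact h3

lemma fderiv_line_rep {f : (Fin n → ℂ) → (Fin m → ℂ)} {v u : Fin n → ℂ} {s : ℝ}
    (hs : 0 < s) (hf : ∀ z : ℂ, ‖z‖ ≤ s → DifferentiableAt ℂ f (v + z • u)) :
    fderiv ℂ f v u
      = (2 * Real.pi * Complex.I : ℂ)⁻¹ •
          ∮ z in C(0, s), z⁻¹ • z⁻¹ • f (v + z • u) := by
  have hφd : DifferentiableOn ℂ (fun z : ℂ => f (v + z • u)) (closedBall 0 s) := by
    intro z hz
    have h1 : DifferentiableAt ℂ (fun z : ℂ => v + z • u) z :=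
      (differentiableAt_id.smul_const u).const_add v
    exact ((hf z (by simpa [Complex.dist_eq] using hz)).comp z h1).differentiableWithinAt
  have hps := hφd.hasFPowerSeriesOnBall (R := ⟨s, hs.le⟩) (by exact_mod_cast hs)
  have hder := hps.hasFPowerSeriesAt.deriv
  have h0 : HasDerivAt (fun z : ℂ => f (v + z • u)) (fderiv ℂ f v u) 0 :=
    line_hasDerivAt (by simpa using hf 0 (by simp [hs.le]))
  rw [h0.deriv] at hder
  rw [hder]
  rw [cauchyPowerSeries_apply]
  simp [one_div]
  rfl

end FrobAux

namespace FrobAux2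
open FrobAux
variable {n m : ℕ}

lemma fderiv_locally_bounded {f : (Fin n → ℂ) → (Fin m → ℂ)} {W : Set (Fin n → ℂ)}
    (hW : IsOpen W) (hf : DifferentiableOn ℂ f W) {w : Fin n → ℂ} (hw : w ∈ W) :
    ∃ ρ : ℝ, 0 < ρ ∧ ∃ C : ℝ, closedBall w (3 * ρ) ⊆ W ∧
      ∀ v ∈ ball w (2 * ρ), ‖fderiv ℂ f v‖ ≤ C := by
  obtain ⟨r, hr, hrW⟩ := Metric.nhds_basis_closedBall.mem_iff.1 (hW.mem_nhds hw)
  obtain ⟨M, hM⟩ := (isCompact_closedBall w r).exists_bound_of_continuousOn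
    (hf.continuousOn.mono hrW)
  have hM0 : 0 ≤ M := le_trans (norm_nonneg _) (hM w (mem_closedBall_self hr.le))
  refine ⟨r / 3, by positivity, M / (r / 3), by
    intro x hx
    exact hrW (by simpa [show 3 * (r / 3) = r by ring] using hx), ?_⟩
  intro v hv
  have hr3 : (0:ℝ) < r / 3 := by positivity
  apply ContinuousLinearMap.opNorm_le_bound _ (by positivity)
  intro u
  rcases eq_or_ne u 0 with h | h
  · simp [h]
  have hu : 0 < ‖u‖ := norm_pos_iff.2 h
  set s : ℝ := (r / 3) / ‖u‖ with hs_def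
  have hspos : 0 < s := by positivity
  have hmem : ∀ z : ℂ, ‖z‖ ≤ s → v + z • u ∈ closedBall w r := by
    intro z hz
    have h1 : dist (v + z • u) v = ‖z‖ * ‖u‖ := by
      rw [dist_eq_norm]; simp [norm_smul]
    have h2 : dist v w < 2 * (r / 3) := by simpa using hv
    have h3 : ‖z‖ * ‖u‖ ≤ r / 3 := by
      calc ‖z‖ * ‖u‖ ≤ s * ‖u‖ := by gcongr
        _ = r / 3 := by rw [hs_def]; field_simp; try ring
    have h4 := dist_triangle (v + z • u) v w
    simp only [mem_closedBall]
    linarith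
  have hdiff : ∀ z : ℂ, ‖z‖ ≤ s → DifferentiableAt ℂ f (v + z • u) := fun z hz =>
    hf.differentiableAt (hW.mem_nhds (hrW (hmem z hz)))
  rw [fderiv_line_rep hspos hdiff]
  have hbnd : ∀ z ∈ Metric.sphere (0:ℂ) s, ‖z⁻¹ • z⁻¹ • f (v + z • u)‖ ≤ s⁻¹ * (s⁻¹ * M) := by
    intro z hz
    have hzn : ‖z‖ = s := by simpa using hz
    simp only [norm_smul, norm_inv, hzn]
    have : ‖f (v + z • u)‖ ≤ M := hM _ (hmem z (le_of_eq hzn))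
    gcongr
  have := circleIntegral.norm_two_pi_i_inv_smul_integral_le_of_norm_le_const hspos.le hbnd
  calc ‖(2 * Real.pi * Complex.I : ℂ)⁻¹ • ∮ z in C(0, s), z⁻¹ • z⁻¹ • f (v + z • u)‖
      ≤ s * (s⁻¹ * (s⁻¹ * M)) := this
    _ = M / (r / 3) * ‖u‖ := by rw [hs_def]; field_simp

end FrobAux2

namespace FrobAux3
open FrobAux FrobAux2
variable {n m : ℕ}

lemma fderiv_apply_differentiableAt {f : (Fin n → ℂ) → (Fin m → ℂ)} {W : Set (Fin n → ℂ)}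
    (hW : IsOpen W) (hf : DifferentiableOn ℂ f W) {w : Fin n → ℂ} (hw : w ∈ W)
    (u : Fin n → ℂ) :
    DifferentiableAt ℂ (fun v => fderiv ℂ f v u) w := by
  obtain ⟨ρ, hρ, C, hsub, hbd⟩ := fderiv_locally_bounded hW hf hw
  have hwball : w ∈ ball w (2 * ρ) := mem_ball_self (by linarith : (0:ℝ) < 2 * ρ)
  have hC0 : 0 ≤ C := le_trans (norm_nonneg _) (hbd w hwball)
  set s : ℝ := ρ / (‖u‖ + 1) with hs_def
  have hspos : 0 < s := by positivity
  have hsu : s * ‖u‖ < ρ := by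
    rw [hs_def, div_mul_eq_mul_div, div_lt_iff₀ (by positivity)]
    nlinarith [norm_nonneg u]
  have hmem : ∀ v ∈ ball w ρ, ∀ z : ℂ, ‖z‖ ≤ s → v + z • u ∈ ball w (2 * ρ) := by
    intro v hv z hz
    have h1 : dist (v + z • u) v = ‖z‖ * ‖u‖ := by rw [dist_eq_norm]; simp [norm_smul]
    have h4 := dist_triangle (v + z • u) v w
    have h2 : dist v w < ρ := by simpa using hv
    have h3 : ‖z‖ * ‖u‖ < ρ := lt_of_le_of_lt (mul_le_mul_of_nonneg_right hz (norm_nonneg u)) hsu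
    simp only [mem_ball]
    linarith
  have hWmem : ∀ v ∈ ball w ρ, ∀ z : ℂ, ‖z‖ ≤ s → v + z • u ∈ W := by
    intro v hv z hz
    apply hsub
    have := hmem v hv z hz
    simp only [mem_ball] at this
    simp only [mem_closedBall]
    linarith
  have hdiffpt : ∀ v ∈ ball w ρ, ∀ z : ℂ, ‖z‖ ≤ s → DifferentiableAt ℂ f (v + z • u) :=
    fun v hv z hz => hf.differentiableAt (hW.mem_nhds (hWmem v hv z hz))
  have hzms : ∀ θ : ℝ, ‖circleMap 0 s θ‖ = s := by
    intro θ
    simp [norm_circleMap_zero, abs_of_pos hspos]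
  set c : ℝ → ℂ := fun θ =>
    deriv (circleMap 0 s) θ * ((circleMap 0 s θ)⁻¹ * (circleMap 0 s θ)⁻¹) with hc
  have hccont : Continuous c := by
    simp only [hc, deriv_circleMap]
    fun_prop (disch := intro θ; exact circleMap_ne_center hspos.ne')
  have hnormc : ∀ θ, ‖c θ‖ = s⁻¹ := by
    intro θ
    simp only [hc, deriv_circleMap, norm_mul, norm_inv, hzms, Complex.norm_I]
    field_simp
  set F : (Fin n → ℂ) → ℝ → (Fin m → ℂ) := fun v θ => c θ • f (v + circleMap 0 s θ • u) with hF
  set F' : (Fin n → ℂ) → ℝ → ((Fin n → ℂ) →L[ℂ] (Fin m → ℂ)) :=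
    fun v θ => c θ • fderiv ℂ f (v + circleMap 0 s θ • u) with hF'
  have hcont_inner : ∀ v ∈ ball w ρ, Continuous fun θ => f (v + circleMap 0 s θ • u) := by
    intro v hv
    rw [continuous_iff_continuousAt]
    intro θ
    have hdm := (hdiffpt v hv _ (le_of_eq (hzms θ))).continuousAt
    have hg : Continuous fun θ : ℝ => v + circleMap 0 s θ • u :=
      continuous_const.add ((continuous_circleMap 0 s).smul continuous_const)
    exact ContinuousAt.comp (g := f) (f := fun θ : ℝ => v + circleMap 0 s θ • u) hdm hg.continuousAt
  letI : MeasurableSpace ((Fin n → ℂ) →L[ℂ] (Fin m → ℂ)) := borel _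
  haveI : BorelSpace ((Fin n → ℂ) →L[ℂ] (Fin m → ℂ)) := ⟨rfl⟩
  have key := intervalIntegral.hasFDerivAt_integral_of_dominated_of_fderiv_le
    (F := F) (F' := F') (x₀ := w) (a := (0:ℝ)) (b := 2 * Real.pi) (μ := MeasureTheory.volume)
    (bound := fun _ => s⁻¹ * C) (s := ball w ρ) (ball_mem_nhds w hρ)
    (Filter.eventually_of_mem (ball_mem_nhds w hρ) (fun x hx =>
      ((hccont.smul (hcont_inner x hx)).aestronglyMeasurable)))
    ((hccont.smul (hcont_inner w (mem_ball_self hρ))).intervalIntegrable _ _)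
    (by
      have h1 : MeasureTheory.StronglyMeasurable
          fun θ : ℝ => fderiv ℂ f (w + circleMap 0 s θ • u) :=
        ((measurable_fderiv ℂ f).comp
          (continuous_const.add
            ((continuous_circleMap 0 s).smul continuous_const)).measurable).stronglyMeasurable
      exact (hccont.stronglyMeasurable.smul h1).aestronglyMeasurable)
    (MeasureTheory.ae_of_all _ (by
      intro θ _ x hx
      show ‖c θ • fderiv ℂ f (x + circleMap 0 s θ • u)‖ ≤ s⁻¹ * C
      calc ‖c θ • fderiv ℂ f (x + circleMap 0 s θ • u)‖
          ≤ ‖c θ‖ * ‖fderiv ℂ f (x + circleMap 0 s θ • u)‖ :=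
            ContinuousLinearMap.opNorm_smul_le _ _
        _ ≤ s⁻¹ * C := by
            rw [hnormc]
            gcongr
            exact hbd _ (hmem x hx _ (le_of_eq (hzms θ)))))
    (intervalIntegrable_const)
    (MeasureTheory.ae_of_all _ (by
      intro θ _ x hx
      have h1 : HasFDerivAt (fun y : Fin n → ℂ => y + circleMap 0 s θ • u)
          (ContinuousLinearMap.id ℂ (Fin n → ℂ)) x := (hasFDerivAt_id x).add_const _
      have h2 := ((hdiffpt x hx _ (le_of_eq (hzms θ))).hasFDerivAt.comp x h1)
      rw [ContinuousLinearMap.comp_id] at h2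
      exact h2.const_smul (c θ)))
  have hd2 : DifferentiableAt ℂ
      (fun v => (2 * Real.pi * Complex.I : ℂ)⁻¹ • ∫ θ in (0:ℝ)..(2 * Real.pi), F v θ) w :=
    key.differentiableAt.fun_const_smul _
  apply hd2.congr_of_eventuallyEq
  filter_upwards [ball_mem_nhds w hρ] with v hv
  rw [fderiv_line_rep hspos (hdiffpt v hv)]
  congr 1
  rw [show (∮ z in C(0, s), z⁻¹ • z⁻¹ • f (v + z • u)) =
    ∫ θ in (0:ℝ)..(2 * Real.pi), deriv (circleMap 0 s) θ •
      ((circleMap 0 s θ)⁻¹ • (circleMap 0 s θ)⁻¹ • f (v + circleMap 0 s θ • u)) from rfl]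
  congr 1
  funext θ
  rw [hF, hc]
  simp only [smul_smul, mul_assoc]

end FrobAux3

section FrobGeoAux

open Metric SubmanifoldDatum

variable {m n : ℕ} {F : FrobeniusStructure m}

/-- The metric as a continuous bilinear map. -/
def gL (F : FrobeniusStructure m) : (Fin m → ℂ) →L[ℂ] (Fin m → ℂ) →L[ℂ] ℂ :=
  LinearMap.toContinuousLinearMap
    { toFun := fun x => LinearMap.toContinuousLinearMap (F.g x)
      map_add' := fun x y => by
        ext z
        simp [LinearMap.coe_toContinuousLinearMap']
      map_smul' := fun c x => by
        ext z
        simp [LinearMap.coe_toContinuousLinearMap'] }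

lemma gL_apply (F : FrobeniusStructure m) (x y : Fin m → ℂ) : gL F x y = F.g x y := by
  simp [gL, LinearMap.coe_toContinuousLinearMap']

lemma fderiv_g_apply (F : FrobeniusStructure m) {a b : (Fin n → ℂ) → (Fin m → ℂ)}
    {w ℓ : Fin n → ℂ} (ha : DifferentiableAt ℂ a w) (hb : DifferentiableAt ℂ b w) :
    fderiv ℂ (fun v => F.g (a v) (b v)) w ℓ
      = F.g (fderiv ℂ a w ℓ) (b w) + F.g (a w) (fderiv ℂ b w ℓ) := by
  have hc : HasFDerivAt (fun v => gL F (a v)) ((gL F).comp (fderiv ℂ a w)) w :=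
    (gL F).hasFDerivAt.comp w ha.hasFDerivAt
  have h := (hc.clm_apply hb.hasFDerivAt).fderiv
  have heq : (fun v => F.g (a v) (b v)) = fun v => gL F (a v) (b v) := by
    funext v; rw [gL_apply]
  rw [heq, h]
  simp only [ContinuousLinearMap.add_apply, ContinuousLinearMap.coe_comp', Function.comp_apply,
    ContinuousLinearMap.flip_apply, gL_apply]
  ring

lemma lift_spec (S : SubmanifoldDatum m n F) (w v : _) (hv : v ∈ Set.range (fderiv ℂ S.emb w)) :
    fderiv ℂ S.emb w (S.lift w v) = v := by
  unfold SubmanifoldDatum.lift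
  rw [dif_pos hv]
  exact hv.choose_spec

lemma g_pr_left (S : SubmanifoldDatum m n F) {w : Fin n → ℂ} (hw : w ∈ S.W)
    (x y : Fin m → ℂ) (hy : y ∈ Set.range (fderiv ℂ S.emb w)) :
    F.g (S.pr w x) y = F.g x y := by
  have h := S.pr_orth w hw x y hy
  rw [map_sub, LinearMap.sub_apply, sub_eq_zero] at h
  exact h.symm

lemma g_perp (S : SubmanifoldDatum m n F) {w : Fin n → ℂ} (hw : w ∈ S.W)
    (x y : Fin m → ℂ) (hy : y ∈ Set.range (fderiv ℂ S.emb w)) :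
    F.g x y - F.g (S.pr w x) y = 0 := by
  rw [g_pr_left S hw x y hy, sub_self]

lemma g_zero_of_basis (S : SubmanifoldDatum m n F) {w : Fin n → ℂ} {z : Fin m → ℂ}
    (h : ∀ j, F.g z (fderiv ℂ S.emb w (Pi.single j 1)) = 0) :
    ∀ y ∈ Set.range (fderiv ℂ S.emb w), F.g z y = 0 := by
  rintro y ⟨a, rfl⟩
  have ha : a = ∑ j, a j • (Pi.single j 1 : Fin n → ℂ) := by
    funext k
    simp [Pi.single_apply, Finset.sum_apply]
  rw [ha, map_sum, map_sum]
  simp only [map_smul, LinearMap.map_smul, smul_eq_mul]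
  rw [Finset.sum_eq_zero]
  intro j _
  rw [h j]
  ring

lemma pr_eq_of (S : SubmanifoldDatum m n F) {w : Fin n → ℂ} (hw : w ∈ S.W)
    {x u : Fin m → ℂ} (hu : u ∈ Set.range (fderiv ℂ S.emb w))
    (horth : ∀ y ∈ Set.range (fderiv ℂ S.emb w), F.g (x - u) y = 0) : S.pr w x = u := by
  obtain ⟨a, ha⟩ := S.pr_mem w hw x
  obtain ⟨b, hb⟩ := hu
  have hd : S.pr w x - u ∈ Set.range (fderiv ℂ S.emb w) :=
    ⟨a - b, by rw [map_sub, ha, hb]⟩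
  have hz : ∀ y ∈ Set.range (fderiv ℂ S.emb w), F.g (S.pr w x - u) y = 0 := by
    intro y hy
    have h1 := S.pr_orth w hw x y hy
    have h2 := horth y hy
    rw [map_sub, LinearMap.sub_apply] at h1 h2 ⊢
    linear_combination h2 - h1
  have := S.g_nondeg_tangent w hw _ hd hz
  rwa [sub_eq_zero] at this

lemma det_differentiableAt {k : ℕ} {M : (Fin n → ℂ) → Matrix (Fin k) (Fin k) ℂ} {x : Fin n → ℂ}
    (h : ∀ i j, DifferentiableAt ℂ (fun v => M v i j) x) :
    DifferentiableAt ℂ (fun v => (M v).det) x := by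
  simp only [Matrix.det_apply']
  apply DifferentiableAt.fun_sum
  intro σ _
  apply DifferentiableAt.const_mul
  exact (HasFDerivAt.finset_prod (fun i _ => (h (σ i) i).hasFDerivAt)).differentiableAt

/-- Key differentiability result: the tangential part `E_N` of the Euler field is
holomorphic. -/
lemma EN_differentiableAt (S : SubmanifoldDatum m n F) {w : Fin n → ℂ} (hw : w ∈ S.W) :
    DifferentiableAt ℂ S.EN w := by
  classical
  set t : (Fin n → ℂ) → Fin n → (Fin m → ℂ) := fun v i => fderiv ℂ S.emb v (Pi.single i 1)
    with ht
  have htd : ∀ i, ∀ v ∈ S.W, DifferentiableAt ℂ (fun v => t v i) v := fun i v hv =>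
    FrobAux3.fderiv_apply_differentiableAt S.W_open S.emb_holo hv _
  have hEe : ∀ v ∈ S.W, DifferentiableAt ℂ (fun v => F.E (S.emb v)) v := fun v hv =>
    (F.E_holo.differentiableAt (F.U_open.mem_nhds (S.emb_maps v hv))).comp v
      (S.emb_holo.differentiableAt (S.W_open.mem_nhds hv))
  set Gm : (Fin n → ℂ) → Matrix (Fin n) (Fin n) ℂ :=
    fun v => Matrix.of fun i j => F.g (t v i) (t v j) with hGm
  set bV : (Fin n → ℂ) → Fin n → ℂ := fun v i => F.g (F.E (S.emb v)) (t v i) with hbV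
  have hGmd : ∀ i j, ∀ v ∈ S.W, DifferentiableAt ℂ (fun v => Gm v i j) v := by
    intro i j v hv
    have : (fun v => Gm v i j) = fun v => gL F (t v i) (t v j) := by
      funext v; rw [gL_apply]; rfl
    rw [this]
    exact ((gL F).differentiable.differentiableAt.comp v (htd i v hv)).clm_apply (htd j v hv)
  have hbVd : ∀ i, ∀ v ∈ S.W, DifferentiableAt ℂ (fun v => bV v i) v := by
    intro i v hv
    have : (fun v => bV v i) = fun v => gL F (F.E (S.emb v)) (t v i) := by
      funext v; rw [gL_apply]
    rw [this]
    exact ((gL F).differentiable.differentiableAt.comp v (hEe v hv)).clm_apply (htd i v hv)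
  have hdet0 : ∀ v ∈ S.W, (Gm v).det ≠ 0 := by
    intro v hv hdet
    obtain ⟨cvec, hc0, hcv⟩ := (Matrix.exists_mulVec_eq_zero_iff).2 hdet
    have hsum : fderiv ℂ S.emb v cvec = ∑ i, cvec i • t v i := by
      have hc : cvec = ∑ i, cvec i • (Pi.single i 1 : Fin n → ℂ) := by
        funext k
        simp [Pi.single_apply, Finset.sum_apply]
      conv_lhs => rw [hc]
      rw [map_sum]
      simp [ht]
    have hz : ∀ j, F.g (fderiv ℂ S.emb v cvec) (t v j) = 0 := by
      intro j
      rw [hsum, map_sum, LinearMap.sum_apply]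
      have hmv := congrFun hcv j
      simp only [hGm, Matrix.mulVec, dotProduct, Matrix.of_apply, Pi.zero_apply] at hmv
      calc ∑ i, (F.g (cvec i • t v i)) (t v j)
          = ∑ i, F.g (t v j) (t v i) * cvec i := by
            refine Finset.sum_congr rfl fun i _ => ?_
            rw [map_smul, LinearMap.smul_apply, smul_eq_mul, F.g_symm]
            ring
        _ = 0 := hmv
    have hy := g_zero_of_basis S (w := v) hz
    have hu0 : fderiv ℂ S.emb v cvec ∈ Set.range (fderiv ℂ S.emb v) := ⟨cvec, rfl⟩
    have hzz := S.g_nondeg_tangent v hv _ hu0 hy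
    exact hc0 (S.demb_inj v hv (show fderiv ℂ S.emb v cvec = fderiv ℂ S.emb v 0 by
      rw [hzz, map_zero]))
  set cf : (Fin n → ℂ) → Fin n → ℂ :=
    fun v => ((Gm v).det)⁻¹ • (((Gm v).adjugate).mulVec (bV v)) with hcf
  have hformula : ∀ v ∈ S.W, S.EN v = ∑ i, cf v i • t v i := by
    intro v hv
    apply pr_eq_of S hv
    · refine ⟨∑ i, cf v i • (Pi.single i 1 : Fin n → ℂ), ?_⟩
      rw [map_sum]
      simp [ht]
    · apply g_zero_of_basis S
      intro j
      rw [map_sub, LinearMap.sub_apply, map_sum, LinearMap.sum_apply]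
      have hGv : (Gm v).mulVec (cf v) = bV v := by
        rw [hcf]
        rw [Matrix.mulVec_smul, Matrix.mulVec_mulVec, Matrix.mul_adjugate,
          Matrix.smul_mulVec, Matrix.one_mulVec, smul_smul,
          inv_mul_cancel₀ (hdet0 v hv), one_smul]
      have hmv := congrFun hGv j
      simp only [hGm, Matrix.mulVec, dotProduct, Matrix.of_apply] at hmv
      have hs : ∑ i, (F.g (cf v i • t v i)) (t v j) = bV v j := by
        rw [← hmv]
        refine Finset.sum_congr rfl fun i _ => ?_
        rw [map_smul, LinearMap.smul_apply, smul_eq_mul, F.g_symm]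
        ring
      rw [hs]
      simp [hbV, ht]
  have hdf : DifferentiableAt ℂ (fun v => ∑ i, cf v i • t v i) w := by
    apply DifferentiableAt.fun_sum
    intro i _
    refine DifferentiableAt.fun_smul ?_ (htd i w hw)
    have h1 : (fun v => cf v i)
        = fun v => ((Gm v).det)⁻¹ * (((Gm v).adjugate).mulVec (bV v)) i := by
      funext v
      rw [hcf]
      simp
    rw [h1]
    apply DifferentiableAt.mul
    · exact (det_differentiableAt (fun a b => hGmd a b w hw)).inv (hdet0 w hw)
    · have h2 : (fun v => (((Gm v).adjugate).mulVec (bV v)) i)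
          = fun v => ∑ j, (Gm v).adjugate i j * bV v j := by
        funext v
        rfl
      rw [h2]
      apply DifferentiableAt.fun_sum
      intro j _
      refine DifferentiableAt.mul ?_ (hbVd j w hw)
      have h3 : (fun v => (Gm v).adjugate i j)
          = fun v => ((Gm v).updateRow j (Pi.single i 1)).det := by
        funext v
        rw [Matrix.adjugate_apply]
      rw [h3]
      apply det_differentiableAt
      intro a b
      by_cases hab : a = j
      · subst hab
        simp only [Matrix.updateRow_apply, if_pos rfl]
        exact differentiableAt_const _
      · simp only [Matrix.updateRow_apply, if_neg hab]
        exact hGmd a b w hw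
  exact hdf.congr_of_eventuallyEq
    (Filter.eventuallyEq_of_mem (S.W_open.mem_nhds hw) hformula)

/-- Main computation: `⟨∇_X E_N, Y⟩ = ⟨(DE)X, Y⟩ + λ⟨X, Y⟩`. -/
lemma nabla_EN_key (S : SubmanifoldDatum m n F) (lam : ℂ)
    (hlam : ∀ X Y, S.IsTangentField X → S.IsTangentField Y → ∀ w ∈ S.W,
      F.g (S.sff X Y w) (S.ENperp w) = lam * F.g (X w) (Y w))
    (X Y : (Fin n → ℂ) → (Fin m → ℂ)) (hX : S.IsTangentField X) (hY : S.IsTangentField Y)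
    (w : Fin n → ℂ) (hw : w ∈ S.W) :
    F.g (S.nabla X S.EN w) (Y w)
      = F.g (fderiv ℂ F.E (S.emb w) (X w)) (Y w) + lam * F.g (X w) (Y w) := by
  have hXd : DifferentiableAt ℂ X w := hX.1.differentiableAt (S.W_open.mem_nhds hw)
  have hYd : DifferentiableAt ℂ Y w := hY.1.differentiableAt (S.W_open.mem_nhds hw)
  have hENd : DifferentiableAt ℂ S.EN w := EN_differentiableAt S hw
  have hembd : DifferentiableAt ℂ S.emb w := S.emb_holo.differentiableAt (S.W_open.mem_nhds hw)
  have hEd : DifferentiableAt ℂ F.E (S.emb w) :=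
    F.E_holo.differentiableAt (F.U_open.mem_nhds (S.emb_maps w hw))
  have hEe : DifferentiableAt ℂ (fun v => F.E (S.emb v)) w := hEd.comp w hembd
  set ℓ := S.lift w (X w) with hℓ
  have h1 : F.g (S.nabla X S.EN w) (Y w) = F.g (fderiv ℂ S.EN w ℓ) (Y w) :=
    g_pr_left S hw _ _ (hY.2 w hw)
  have h2 : ∀ v ∈ S.W, F.g (S.EN v) (Y v) = F.g (F.E (S.emb v)) (Y v) := by
    intro v hv
    exact g_pr_left S hv _ _ (hY.2 v hv)
  have heq : (fun v => F.g (S.EN v) (Y v)) =ᶠ[nhds w] (fun v => F.g (F.E (S.emb v)) (Y v)) :=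
    Filter.eventuallyEq_of_mem (S.W_open.mem_nhds hw) h2
  have h3 : fderiv ℂ (fun v => F.g (S.EN v) (Y v)) w = fderiv ℂ (fun v => F.g (F.E (S.emb v)) (Y v)) w := heq.fderiv_eq
  have h4 : F.g (fderiv ℂ S.EN w ℓ) (Y w) + F.g (S.EN w) (fderiv ℂ Y w ℓ)
      = F.g (fderiv ℂ (fun v => F.E (S.emb v)) w ℓ) (Y w)
        + F.g (F.E (S.emb w)) (fderiv ℂ Y w ℓ) := by
    have hl := fderiv_g_apply F (a := S.EN) (b := Y) (w := w) (ℓ := ℓ) hENd hYd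
    have hr := fderiv_g_apply F (a := fun v => F.E (S.emb v)) (b := Y) (w := w) (ℓ := ℓ) hEe hYd
    rw [← hl, ← hr, h3]
  have h5 : F.g (F.E (S.emb w)) (fderiv ℂ Y w ℓ) - F.g (S.EN w) (fderiv ℂ Y w ℓ)
      = lam * F.g (X w) (Y w) := by
    have hcov : S.covD X Y w = fderiv ℂ Y w ℓ := rfl
    have hsplit : S.covD X Y w = S.sff X Y w + S.pr w (S.covD X Y w) := by
      unfold SubmanifoldDatum.sff
      abel
    have hzero : F.g (S.ENperp w) (S.pr w (S.covD X Y w)) = 0 := by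
      have := S.pr_orth w hw (F.E (S.emb w)) (S.pr w (S.covD X Y w))
        (S.pr_mem w hw (S.covD X Y w))
      exact this
    have hl := hlam X Y hX hY w hw
    have hperp : F.g (F.E (S.emb w)) (fderiv ℂ Y w ℓ) - F.g (S.EN w) (fderiv ℂ Y w ℓ)
        = F.g (S.ENperp w) (S.covD X Y w) := by
      rw [← hcov]
      unfold SubmanifoldDatum.ENperp SubmanifoldDatum.EN
      rw [map_sub, LinearMap.sub_apply]
    rw [hperp, hsplit, map_add, hzero, add_zero, F.g_symm]
    exact hl
  have h6 : fderiv ℂ (fun v => F.E (S.emb v)) w ℓ = fderiv ℂ F.E (S.emb w) (X w) := by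
    have hcomp : fderiv ℂ (F.E ∘ S.emb) w = (fderiv ℂ F.E (S.emb w)).comp (fderiv ℂ S.emb w) :=
      fderiv_comp w hEd hembd
    have : fderiv ℂ (fun v => F.E (S.emb v)) w ℓ
        = fderiv ℂ F.E (S.emb w) (fderiv ℂ S.emb w ℓ) := by
      rw [show (fun v => F.E (S.emb v)) = F.E ∘ S.emb from rfl, hcomp]
      rfl
    rw [this, hℓ, lift_spec S w (X w) (hX.2 w hw)]
  rw [h1, ← h6]
  linear_combination h4 + h5

end FrobGeoAux

/-- Remark 1.3(2), second implication: if the shape operator of `E_N^⊥` equals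
`λ · Id`, i.e. `⟨h(X,Y), E_N^⊥⟩ = λ ⟨X,Y⟩` for all tangent fields, then the
induced Euler condition holds with constant `D_N = D + 2λ`. -/
theorem remark1_3_second {m n : ℕ} (F : FrobeniusStructure m)
    (S : SubmanifoldDatum m n F) (lam : ℂ)
    (hlam : ∀ X Y, S.IsTangentField X → S.IsTangentField Y → ∀ w ∈ S.W,
      F.g (S.sff X Y w) (S.ENperp w) = lam * F.g (X w) (Y w)) :
    ∀ X Y, S.IsTangentField X → S.IsTangentField Y → ∀ w ∈ S.W,
      F.g (S.nabla X S.EN w) (Y w) + F.g (X w) (S.nabla Y S.EN w)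
        = (F.Dconst + 2 * lam) * F.g (X w) (Y w) := by
  intro X Y hX hY w hw
  have hXY := nabla_EN_key S lam hlam X Y hX hY w hw
  have hYX := nabla_EN_key S lam hlam Y X hY hX w hw
  have hsym : F.g (X w) (S.nabla Y S.EN w) = F.g (S.nabla Y S.EN w) (X w) := F.g_symm _ _
  have heuler := F.euler_metric (S.emb w) (S.emb_maps w hw) (X w) (Y w)
  have hsym2 : F.g (fderiv ℂ F.E (S.emb w) (Y w)) (X w)
      = F.g (X w) (fderiv ℂ F.E (S.emb w) (Y w)) := F.g_symm _ _
  have hsym3 : F.g (Y w) (X w) = F.g (X w) (Y w) := F.g_symm _ _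
  rw [hsym, hXY, hYX, hsym2, hsym3]
  linear_combination heuler
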